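/- Let u(t), v(t) be a positive solution of the ODE system u' = (r_u - κ_u(u+v))u + μ_v v - μ_u u, v' = (r_v - κ_v(u+v))v + μ_u u - μ_v v, and let (u*, v*) be a positive equilibrium. Then d/dt F_u(u(t)) ≤ -κ_u (u - u*)^2 - (κ_u - μ_v/u*)(u - u*)(v - v*), where F_u(u) = u - u* - u* log(u/u*), and the inequality is strict unless u = u*. -/

import Mathlib

/-- Along positive solutions of the ODE system, the Lyapunov component
F_u(u(t)) decreases: its derivative is bounded by the stated quadratic
expression, strictly unless u(t) = u*. -/
theorem stmt11 (r_u r_v κ_u κ_v μ_u μ_v ustar vstar : ℝ)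
    (hκu : 0 < κ_u) (hκv : 0 < κ_v) (hμu : 0 < μ_u) (hμv : 0 < μ_v)
    (hust : 0 < ustar) (hvst : 0 < vstar)
    (e1 : (r_u - κ_u * (ustar + vstar)) * ustar + μ_v * vstar - μ_u * ustar = 0)
    (e2 : (r_v - κ_v * (ustar + vstar)) * vstar + μ_u * ustar - μ_v * vstar = 0)
    (u v : ℝ → ℝ) (hupos : ∀ t, 0 < u t) (hvpos : ∀ t, 0 < v t)
    (hu : ∀ t, HasDerivAt u
      ((r_u - κ_u * (u t + v t)) * u t + μ_v * v t - μ_u * u t) t)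
    (hv : ∀ t, HasDerivAt v
      ((r_v - κ_v * (u t + v t)) * v t + μ_u * u t - μ_v * v t) t) :
    ∀ t : ℝ,
      deriv (fun s => u s - ustar - ustar * Real.log (u s / ustar)) t ≤
        -κ_u * (u t - ustar) ^ 2 -
          (κ_u - μ_v / ustar) * (u t - ustar) * (v t - vstar) ∧
      (u t ≠ ustar →
        deriv (fun s => u s - ustar - ustar * Real.log (u s / ustar)) t <
          -κ_u * (u t - ustar) ^ 2 -
            (κ_u - μ_v / ustar) * (u t - ustar) * (v t - vstar)) := by
  intro t
  set U := u t with hU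
  set V := v t with hV
  set D := (r_u - κ_u * (U + V)) * U + μ_v * V - μ_u * U with hD
  have hUpos : 0 < U := hupos t
  have hVpos : 0 < V := hvpos t
  have hUne : U ≠ 0 := ne_of_gt hUpos
  have hune : ∀ s, u s ≠ 0 := fun s => ne_of_gt (hupos s)
  -- derivative of F
  have hF : HasDerivAt (fun s => u s - ustar - ustar * Real.log (u s / ustar))
      (D - ustar * (D / U)) t := by
    have h1 : HasDerivAt (fun s => Real.log (u s / ustar)) (D / U) t := by
      have h2 : (fun s => Real.log (u s / ustar)) =
          fun s => Real.log (u s) - Real.log ustar := by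
        funext s
        rw [Real.log_div (hune s) (ne_of_gt hust)]
      rw [h2]
      simpa using ((hu t).log hUne).sub_const (Real.log ustar)
    exact (((hu t).sub_const ustar).sub (h1.const_mul ustar))
  rw [hF.deriv]
  -- key algebraic identity
  have key : D - ustar * (D / U) =
      (-κ_u * (U - ustar) ^ 2 - (κ_u - μ_v / ustar) * (U - ustar) * (V - vstar))
        - μ_v * V * (U - ustar) ^ 2 / (U * ustar) := by
    have hUne' : U ≠ 0 := hUne
    have hustne : ustar ≠ 0 := ne_of_gt hust
    field_simp
    linear_combination ((U - ustar) * U) * e1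
  have hnn : 0 ≤ μ_v * V * (U - ustar) ^ 2 / (U * ustar) := by
    apply div_nonneg
    · positivity
    · positivity
  constructor
  · rw [key]; linarith
  · intro hne
    have hpos : 0 < μ_v * V * (U - ustar) ^ 2 / (U * ustar) := by
      have h2 : U - ustar ≠ 0 := sub_ne_zero.mpr hne
      have : (0:ℝ) < (U - ustar) ^ 2 := by positivity
      apply div_pos
      · positivity
      · positivity
    rw [key]; linarith
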